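/- Let w be any function in the shape space P(K) = P₂(K) + span{x₁³, x₂³} of the two-dimensional rectangular Morley element on the square K. Then the deviation of the tangential derivative from its edge mean is also the same function on opposite edges: for all x₂ ∈ [x₂c−h, x₂c+h], (R⁰_{e₂}(∂w/∂x₂))(x₂) = (R⁰_{e₄}(∂w/∂x₂))(x₂), and for all x₁ ∈ [x₁c−h, x₁c+h], (R⁰_{e₁}(∂w/∂x₁))(x₁) = (R⁰_{e₃}(∂w/∂x₁))(x₁). -/

import Mathlib

open MeasureTheory

/-- Partial derivative in the first variable of a curried function on `ℝ²`. -/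
noncomputable def pdx (f : ℝ → ℝ → ℝ) : ℝ → ℝ → ℝ := fun x y => deriv (fun t => f t y) x

/-- Partial derivative in the second variable of a curried function on `ℝ²`. -/
noncomputable def pdy (f : ℝ → ℝ → ℝ) : ℝ → ℝ → ℝ := fun x y => deriv (fun t => f x t) y

/-- Membership in the shape space `P(K) = P₂(K) + span{x₁³, x₂³}` of the two-dimensional
rectangular Morley element. -/
def MorleyShape2 (w : ℝ → ℝ → ℝ) : Prop :=
  ∃ c0 c1 c2 c3 c4 c5 c6 c7 : ℝ, ∀ x y : ℝ,
    w x y = c0 + c1 * x + c2 * y + c3 * x ^ 2 + c4 * (x * y) + c5 * y ^ 2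
      + c6 * x ^ 3 + c7 * y ^ 3

lemma cubic_hasDerivAt (a b c d t : ℝ) :
    HasDerivAt (fun s : ℝ => a + b * s + c * s ^ 2 + d * s ^ 3)
      (b + 2 * c * t + 3 * d * t ^ 2) t := by
  have h1 : HasDerivAt (fun s : ℝ => b * s) b t := by
    simpa using (hasDerivAt_id t).const_mul b
  have h2 : HasDerivAt (fun s : ℝ => c * s ^ 2) (c * (2 * t ^ 1)) t :=
    (hasDerivAt_pow 2 t).const_mul c
  have h3 : HasDerivAt (fun s : ℝ => d * s ^ 3) (d * (3 * t ^ 2)) t :=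
    (hasDerivAt_pow 3 t).const_mul d
  have := (((hasDerivAt_const t a).add h1).add h2).add h3
  refine this.congr_deriv ?_
  ring

lemma cubic_deriv (a b c d : ℝ) :
    deriv (fun s : ℝ => a + b * s + c * s ^ 2 + d * s ^ 3)
      = fun t : ℝ => b + 2 * c * t + 3 * d * t ^ 2 := by
  funext t
  exact (cubic_hasDerivAt a b c d t).deriv

lemma cubic_integral (b c d α β : ℝ) :
    (∫ t in α..β, (b + 2 * c * t + 3 * d * t ^ 2))
      = (b * β + c * β ^ 2 + d * β ^ 3) - (b * α + c * α ^ 2 + d * α ^ 3) := by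
  have h : ∀ t ∈ Set.uIcc α β,
      HasDerivAt (fun s : ℝ => 0 + b * s + c * s ^ 2 + d * s ^ 3)
        (b + 2 * c * t + 3 * d * t ^ 2) t := fun t _ => cubic_hasDerivAt 0 b c d t
  have hi : IntervalIntegrable (fun t : ℝ => b + 2 * c * t + 3 * d * t ^ 2)
      MeasureTheory.volume α β := by
    apply Continuous.intervalIntegrable
    continuity
  have := intervalIntegral.integral_eq_sub_of_hasDerivAt h hi
  simpa using this

/-- For `w` in the 2D rectangular Morley shape space, the deviation of the tangential
derivative from its edge mean coincides on the two opposite edges of `K`. -/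
theorem stmt_1 (x1c x2c h : ℝ) (hh : 0 < h) (w : ℝ → ℝ → ℝ) (hw : MorleyShape2 w) :
    (∀ y ∈ Set.Icc (x2c - h) (x2c + h),
        pdy w (x1c + h) y - (1 / (2 * h)) * (∫ t in (x2c - h)..(x2c + h), pdy w (x1c + h) t)
          = pdy w (x1c - h) y - (1 / (2 * h)) * (∫ t in (x2c - h)..(x2c + h), pdy w (x1c - h) t)) ∧
    (∀ x ∈ Set.Icc (x1c - h) (x1c + h),
        pdx w x (x2c - h) - (1 / (2 * h)) * (∫ t in (x1c - h)..(x1c + h), pdx w t (x2c - h))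
          = pdx w x (x2c + h) - (1 / (2 * h)) * (∫ t in (x1c - h)..(x1c + h), pdx w t (x2c + h))) := by
  obtain ⟨c0, c1, c2, c3, c4, c5, c6, c7, hwf⟩ := hw
  have hne : (2 : ℝ) * h ≠ 0 := by positivity
  have hpdy : ∀ x y : ℝ, pdy w x y = c2 + c4 * x + 2 * c5 * y + 3 * c7 * y ^ 2 := by
    intro x y
    have hfun : (fun t => w x t)
        = fun t : ℝ => (c0 + c1 * x + c3 * x ^ 2 + c6 * x ^ 3) + (c2 + c4 * x) * t
            + c5 * t ^ 2 + c7 * t ^ 3 := by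
      funext t; rw [hwf x t]; ring
    unfold pdy
    rw [hfun, cubic_deriv]
  have hpdx : ∀ x y : ℝ, pdx w x y = c1 + c4 * y + 2 * c3 * x + 3 * c6 * x ^ 2 := by
    intro x y
    have hfun : (fun t => w t y)
        = fun t : ℝ => (c0 + c2 * y + c5 * y ^ 2 + c7 * y ^ 3) + (c1 + c4 * y) * t
            + c3 * t ^ 2 + c6 * t ^ 3 := by
      funext t; rw [hwf t y]; ring
    unfold pdx
    rw [hfun, cubic_deriv]
  constructor
  · intro y _
    have hI : ∀ x : ℝ, (∫ t in (x2c - h)..(x2c + h), pdy w x t)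
        = ((c2 + c4 * x) * (x2c + h) + c5 * (x2c + h) ^ 2 + c7 * (x2c + h) ^ 3)
          - ((c2 + c4 * x) * (x2c - h) + c5 * (x2c - h) ^ 2 + c7 * (x2c - h) ^ 3) := by
      intro x
      have : (fun t => pdy w x t)
          = fun t : ℝ => (c2 + c4 * x) + 2 * c5 * t + 3 * c7 * t ^ 2 := by
        funext t; rw [hpdy x t]
      rw [this, cubic_integral]
    rw [hpdy, hpdy, hI, hI]
    field_simp
    ring
  · intro x _
    have hI : ∀ y : ℝ, (∫ t in (x1c - h)..(x1c + h), pdx w t y)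
        = ((c1 + c4 * y) * (x1c + h) + c3 * (x1c + h) ^ 2 + c6 * (x1c + h) ^ 3)
          - ((c1 + c4 * y) * (x1c - h) + c3 * (x1c - h) ^ 2 + c6 * (x1c - h) ^ 3) := by
      intro y
      have : (fun t => pdx w t y)
          = fun t : ℝ => (c1 + c4 * y) + 2 * c3 * t + 3 * c6 * t ^ 2 := by
        funext t; rw [hpdx t y]
      rw [this, cubic_integral]
    rw [hpdx, hpdx, hI, hI]
    field_simp
    ring
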